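/- Let p ≥ 5 be prime and q = p^r. For a ∈ F_q^×, the number of distinct roots in F_q of the polynomial x^4 − (a^3/2)x + 3a^4/16 equals 2 + φ(−2), where φ is the quadratic character of F_q. -/

import Mathlib

/-- For `p ≥ 5`, `q = p^r` and `a ∈ F_q^×`, the number of distinct roots in `F_q` of
`x^4 - (a^3/2) x + 3a^4/16` is `2 + φ(-2)`, where `φ` is the quadratic character. -/
theorem stmt15 (p r : ℕ) (hp : p.Prime) (hp5 : 5 ≤ p) (hr : 0 < r)
    (F : Type) [Field F] [Fintype F] [DecidableEq F] (hcard : Fintype.card F = p ^ r)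
    (a : F) (ha : a ≠ 0) :
    ((Finset.univ.filter fun x : F =>
        x ^ 4 - a ^ 3 / 2 * x + 3 * a ^ 4 / 16 = 0).card : ℤ) =
      2 + quadraticChar F (-2) := by
  -- characteristic facts
  have h6 : (6 : F) ≠ 0 := by
    haveI hchar : CharP F (ringChar F) := ringChar.charP F
    have hrprime : (ringChar F).Prime := CharP.char_is_prime F (ringChar F)
    obtain ⟨n, -, hcard'⟩ := FiniteField.card F (ringChar F)
    have hpc : ringChar F = p := by
      have h1 : ringChar F ∣ p ^ r := (hcard'.symm.trans hcard) ▸ dvd_pow_self _ n.2.ne'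
      exact (Nat.prime_dvd_prime_iff_eq hrprime hp).mp (hrprime.dvd_of_dvd_pow h1)
    have : ((6 : ℕ) : F) ≠ 0 := by
      rw [Ne, CharP.cast_eq_zero_iff F (ringChar F) 6, hpc]
      intro h
      have h6 := Nat.le_of_dvd (by norm_num) h
      interval_cases p <;> revert hp h <;> decide
    simpa using this
  have h2 : (2 : F) ≠ 0 := by
    intro h; apply h6; have e : (6 : F) = 2 * 3 := by norm_num
    rw [e, h, zero_mul]
  have h16 : (16 : F) ≠ 0 := by
    intro h; apply h2
    have e : (16 : F) = 2 ^ 4 := by norm_num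
    rw [e] at h
    exact pow_eq_zero_iff (by norm_num) |>.mp h
  have hn2 : (-2 : F) ≠ 0 := by simpa using h2
  have hmain : ∀ x : F, (x ^ 4 - a ^ 3 / 2 * x + 3 * a ^ 4 / 16 = 0) ↔
      ((2 * x - a) ^ 2 * ((2 * x + a) ^ 2 + 2 * a ^ 2) = 0) := by
    intro x
    have hid : (2 * x - a) ^ 2 * ((2 * x + a) ^ 2 + 2 * a ^ 2) =
        16 * (x ^ 4 - a ^ 3 / 2 * x + 3 * a ^ 4 / 16) := by
      field_simp [h2]
      ring
    rw [hid, mul_eq_zero]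
    constructor
    · intro h; exact Or.inr h
    · rintro (h | h); · exact absurd h h16
      · exact h
  have hc : ∀ c y : F, 2 * y = c ↔ y = c / 2 := fun c y => by
    rw [eq_div_iff h2, mul_comm]
  by_cases hsq : IsSquare (-2 : F)
  · -- three roots
    obtain ⟨s, hs⟩ := hsq
    have hs' : s * s = -2 := hs.symm
    have hs0 : s ≠ 0 := by
      intro h; rw [h, mul_zero] at hs'; exact hn2 hs'.symm
    set x1 : F := (s - 1) * a / 2 with hx1
    set x2 : F := (-s - 1) * a / 2 with hx2
    have hfilter : (Finset.univ.filter fun x : F =>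
        x ^ 4 - a ^ 3 / 2 * x + 3 * a ^ 4 / 16 = 0) = {a / 2, x1, x2} := by
      ext x
      simp only [Finset.mem_filter, Finset.mem_univ, true_and, Finset.mem_insert,
        Finset.mem_singleton, hmain x]
      have hfac : (2 * x + a) ^ 2 + 2 * a ^ 2 =
          (2 * x - (s - 1) * a) * (2 * x - (-s - 1) * a) := by
        linear_combination a ^ 2 * hs'
      rw [hfac, ← mul_assoc, mul_eq_zero, mul_eq_zero,
        pow_eq_zero_iff (by norm_num : (2:ℕ) ≠ 0), sub_eq_zero, sub_eq_zero, sub_eq_zero,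
        hc, hc, hc, hx1, hx2, or_assoc]
    have hne1 : a / 2 ≠ x1 := by
      rw [hx1]; intro h
      field_simp at h
      apply h6
      have hs2 : s = 2 := by linear_combination -h
      rw [hs2] at hs'
      linear_combination hs'
    have hne2 : a / 2 ≠ x2 := by
      rw [hx2]; intro h
      field_simp at h
      apply h6
      have hs2 : s = -2 := by linear_combination h
      rw [hs2] at hs'
      linear_combination hs'
    have hne3 : x1 ≠ x2 := by
      rw [hx1, hx2]; intro h
      have h0 := congrArg (fun t : F => t * 2) h
      simp only [div_mul_cancel₀ _ h2] at h0
      have h' : (2 * s) * a = 0 := by linear_combination h0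
      rcases mul_eq_zero.mp h' with h'' | h''
      · rcases mul_eq_zero.mp h'' with h3 | h3
        · exact h2 h3
        · exact hs0 h3
      · exact ha h''
    rw [hfilter]
    have hcard3 : ({a / 2, x1, x2} : Finset F).card = 3 := by
      rw [Finset.card_insert_of_notMem (by simp [hne1, hne2]),
        Finset.card_insert_of_notMem (by simp [hne3]), Finset.card_singleton]
    rw [hcard3, (quadraticChar_one_iff_isSquare hn2).mpr ⟨s, hs⟩]
    norm_num
  · -- one root
    have hfilter : (Finset.univ.filter fun x : F =>
        x ^ 4 - a ^ 3 / 2 * x + 3 * a ^ 4 / 16 = 0) = {a / 2} := by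
      ext x
      simp only [Finset.mem_filter, Finset.mem_univ, true_and, Finset.mem_singleton, hmain x]
      constructor
      · intro h
        rcases mul_eq_zero.mp h with h' | h'
        · have hx : 2 * x - a = 0 := pow_eq_zero_iff (by norm_num : (2:ℕ) ≠ 0) |>.mp h'
          rw [sub_eq_zero] at hx
          exact (hc a x).mp hx
        · exfalso
          apply hsq
          refine ⟨(2 * x + a) / a, ?_⟩
          have hsqr : (2 * x + a) ^ 2 = -2 * a ^ 2 := by linear_combination h'
          field_simp
          linear_combination -hsqr
      · intro h
        have h0 : 2 * x - a = 0 := by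
          rw [sub_eq_zero]; exact (hc a x).mpr h
        rw [h0]
        ring
    rw [hfilter, Finset.card_singleton,
      quadraticChar_neg_one_iff_not_isSquare.mpr hsq]
    norm_num
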